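/- Sinkhorn's algorithm, run with stopping criterion ‖B(u_k,v_k)1ₙ − r‖₁ + ‖B(u_k,v_k)ᵀ1ₙ − c‖₁ < ε₀, terminates after at most k ≤ 2 + 4R/ε₀ iterations, where R = −ln(e^{−‖C‖∞/γ} · min_{i,j}{r_i, c_j}). -/

import Mathlib

open Real

-- φ(t) = (t+1) log t − 2(t−1) is monotone on (0,∞)
lemma phi_mono : MonotoneOn (fun t : ℝ => (t+1) * Real.log t - 2*(t-1)) (Set.Ioi 0) := by
  have h : ∀ t ∈ Set.Ioi (0:ℝ), HasDerivAt (fun t : ℝ => (t+1) * Real.log t - 2*(t-1))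
      (Real.log t + (t+1)/t - 2) t := by
    intro t ht
    have ht' : t ≠ 0 := ne_of_gt ht
    have h1 : HasDerivAt (fun t : ℝ => (t+1) * Real.log t) (1 * Real.log t + (t+1) * t⁻¹) t :=
      (((hasDerivAt_id t).add_const 1)).mul (Real.hasDerivAt_log ht')
    have h2 : HasDerivAt (fun t : ℝ => 2*(t-1)) 2 t := by
      simpa using ((hasDerivAt_id t).sub_const 1).const_mul 2
    have := h1.sub h2
    refine this.congr_deriv ?_
    ring
  apply monotoneOn_of_deriv_nonneg (convex_Ioi 0)
  · exact fun t ht => (h t ht).continuousAt.continuousWithinAt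
  · intro t ht
    rw [interior_Ioi] at ht
    exact (h t ht).differentiableAt.differentiableWithinAt
  · intro t ht
    rw [interior_Ioi] at ht
    rw [(h t ht).deriv]
    have h3 : 1 - t⁻¹ ≤ Real.log t := Real.one_sub_inv_le_log_of_pos ht
    have ht0 : (0:ℝ) < t := ht
    have : (t+1)/t = 1 + t⁻¹ := by field_simp
    rw [this]
    nlinarith [inv_pos.mpr ht0]

lemma h_hasDeriv : ∀ t ∈ Set.Ioi (0:ℝ), HasDerivAt
    (fun t : ℝ => (2*t+4)*(t * Real.log t - t + 1) - 3*(t-1)^2)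
    (4*((t+1) * Real.log t - 2*(t-1))) t := by
  intro t ht
  have ht' : t ≠ 0 := ne_of_gt ht
  have hlog : HasDerivAt Real.log t⁻¹ t := Real.hasDerivAt_log ht'
  have h1 : HasDerivAt (fun t : ℝ => t * Real.log t - t + 1) (Real.log t) t := by
    have := ((hasDerivAt_id t).mul hlog).sub (hasDerivAt_id t)
    have h2 := this.add_const 1
    refine h2.congr_deriv ?_
    simp [ht']
  have h2 : HasDerivAt (fun t : ℝ => 2*t+4) 2 t := by
    simpa using ((hasDerivAt_id t).const_mul 2).add_const 4
  have h3 : HasDerivAt (fun t : ℝ => 3*(t-1)^2) (3*(2*(t-1))) t := by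
    have := (((hasDerivAt_id t).sub_const 1).pow 2).const_mul 3
    refine this.congr_deriv ?_
    norm_num [id]
  have := (h2.mul h1).sub h3
  refine this.congr_deriv ?_
  ring

lemma h_nonneg {t : ℝ} (ht : 0 < t) :
    0 ≤ (2*t+4)*(t * Real.log t - t + 1) - 3*(t-1)^2 := by
  have key : ∀ s ∈ Set.Ioi (0:ℝ), 1 ≤ s → 0 ≤ (s+1) * Real.log s - 2*(s-1) := by
    intro s hs h1
    have := phi_mono (by norm_num : (1:ℝ) ∈ Set.Ioi (0:ℝ)) hs h1
    simpa using this
  have key2 : ∀ s ∈ Set.Ioi (0:ℝ), s ≤ 1 → (s+1) * Real.log s - 2*(s-1) ≤ 0 := by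
    intro s hs h1
    have := phi_mono hs (by norm_num : (1:ℝ) ∈ Set.Ioi (0:ℝ)) h1
    simpa using this
  rcases le_total 1 t with h1 | h1
  · -- monotone on [1,∞)
    have mono : MonotoneOn (fun t : ℝ => (2*t+4)*(t * Real.log t - t + 1) - 3*(t-1)^2)
        (Set.Ici (1:ℝ)) := by
      apply monotoneOn_of_deriv_nonneg (convex_Ici 1)
      · intro s hs
        exact (h_hasDeriv s (show (0:ℝ) < s from lt_of_lt_of_le one_pos hs)).continuousAt.continuousWithinAt
      · intro s hs
        rw [interior_Ici] at hs
        exact (h_hasDeriv s (show (0:ℝ) < s from lt_trans one_pos hs)).differentiableAt.differentiableWithinAt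
      · intro s hs
        rw [interior_Ici] at hs
        rw [(h_hasDeriv s (show (0:ℝ) < s from lt_trans one_pos hs)).deriv]
        have := key s (show (0:ℝ) < s from lt_trans one_pos hs) hs.le
        linarith
    have := mono (Set.self_mem_Ici) h1 h1
    simpa using this
  · have anti : AntitoneOn (fun t : ℝ => (2*t+4)*(t * Real.log t - t + 1) - 3*(t-1)^2)
        (Set.Ioc (0:ℝ) 1) := by
      apply antitoneOn_of_deriv_nonpos (convex_Ioc 0 1)
      · intro s hs
        exact (h_hasDeriv s hs.1).continuousAt.continuousWithinAt
      · intro s hs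
        rw [interior_Ioc] at hs
        exact (h_hasDeriv s hs.1).differentiableAt.differentiableWithinAt
      · intro s hs
        rw [interior_Ioc] at hs
        rw [(h_hasDeriv s hs.1).deriv]
        have := key2 s hs.1 hs.2.le
        linarith
    have := anti (Set.mem_Ioc.mpr ⟨ht, h1⟩) (Set.mem_Ioc.mpr ⟨one_pos, le_refl 1⟩) h1
    simpa using this

lemma pointwise_kl {x y : ℝ} (hx : 0 < x) (hy : 0 < y) :
    3*(x-y)^2/(2*x+4*y) ≤ x*(Real.log x - Real.log y) - x + y := by
  have ht : 0 < x / y := div_pos hx hy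
  have h := h_nonneg ht
  have hxy : Real.log (x/y) = Real.log x - Real.log y := Real.log_div (ne_of_gt hx) (ne_of_gt hy)
  rw [hxy] at h
  have hden : 0 < 2*(x/y)+4 := by positivity
  rw [div_le_iff₀ (by positivity : (0:ℝ) < 2*x+4*y)]
  have hy' : y ≠ 0 := ne_of_gt hy
  have expand : (2*(x/y)+4)*((x/y) * (Real.log x - Real.log y) - (x/y) + 1) - 3*((x/y)-1)^2
      = ((x*(Real.log x - Real.log y) - x + y) * (2*x+4*y) - 3*(x-y)^2) / y^2 := by
    field_simp
  rw [expand] at h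
  have := (div_nonneg_iff.mp h)
  rcases this with ⟨h1, _⟩ | ⟨_, h2⟩
  · linarith
  · nlinarith [sq_nonneg y]

lemma pinsker {n : ℕ} (P Q : Fin n → ℝ) (hP : ∀ i, 0 < P i) (hQ : ∀ i, 0 < Q i)
    (hP1 : ∑ i, P i = 1) (hQ1 : ∑ i, Q i = 1) :
    (∑ i, |P i - Q i|)^2 / 2 ≤ ∑ i, P i * (Real.log (P i) - Real.log (Q i)) := by
  have hg : ∀ i ∈ Finset.univ, (0:ℝ) < (2*P i + 4*Q i)/3 := by
    intro i _
    have := hP i; have := hQ i; positivity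
  have CS := Finset.sq_sum_div_le_sum_sq_div Finset.univ (fun i => |P i - Q i|) hg
  have hsum : ∑ i, (2*P i + 4*Q i)/3 = 2 := by
    rw [← Finset.sum_div, Finset.sum_add_distrib, ← Finset.mul_sum, ← Finset.mul_sum, hP1, hQ1]
    norm_num
  rw [hsum] at CS
  have step : ∀ i ∈ Finset.univ, |P i - Q i|^2/((2*P i + 4*Q i)/3)
      ≤ P i * (Real.log (P i) - Real.log (Q i)) - P i + Q i := by
    intro i _
    have h := pointwise_kl (hP i) (hQ i)
    have : |P i - Q i|^2/((2*P i + 4*Q i)/3) = 3*(P i - Q i)^2/(2*P i+4*Q i) := by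
      rw [sq_abs]
      field_simp
    rw [this]
    exact h
  have CS2 := CS.trans (Finset.sum_le_sum step)
  have : ∑ i, (P i * (Real.log (P i) - Real.log (Q i)) - P i + Q i)
      = ∑ i, P i * (Real.log (P i) - Real.log (Q i)) := by
    rw [Finset.sum_add_distrib, Finset.sum_sub_distrib, hP1, hQ1]
    ring
  rw [this] at CS2
  exact CS2

open Classical in
lemma count_lemma (ψ err : ℕ → ℝ) (R ε₀ : ℝ) (hR : 0 ≤ R) (hε : 0 < ε₀) (N : ℕ)
    (hψ0 : ∀ k, 1 ≤ k → 0 ≤ ψ k)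
    (hψR : ∀ k, 1 ≤ k → ψ k ≤ R * err k)
    (hdec : ∀ k, 1 ≤ k → err k ^ 2 / 2 ≤ ψ k - ψ (k+1))
    (hN : 1 + 4 * R / ε₀ ≤ (N:ℝ)) :
    ∃ k, 1 ≤ k ∧ k ≤ N ∧ err k ≤ ε₀ := by
  by_contra hcon
  push_neg at hcon
  -- err k > ε₀ for all k ∈ [1, N]
  have herr : ∀ k, 1 ≤ k → k ≤ N → ε₀ < err k := hcon
  have hdecε : ∀ k, 1 ≤ k → k ≤ N → ε₀^2/2 ≤ ψ k - ψ (k+1) := by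
    intro k h1 h2
    have h := hdec k h1
    have := herr k h1 h2
    nlinarith
  rcases eq_or_lt_of_le hR with hR0 | hRpos
  · -- R = 0 case
    have hN1 : 1 ≤ N := by
      by_contra h
      push_neg at h
      interval_cases N
      · rw [← hR0] at hN; simp at hN; linarith
    have hψ1 : ψ 1 ≤ 0 := by
      have := hψR 1 le_rfl
      rw [← hR0] at this; simpa using this
    have := hdecε 1 le_rfl hN1
    have := hψ0 2 (by norm_num)
    nlinarith
  · -- R > 0
    set s : ℝ := R * ε₀ with hs
    have hspos : 0 < s := mul_pos hRpos hε
    set pred : ℕ → Prop := fun k => ∀ m, 1 ≤ m → m ≤ k → s < ψ m with hpred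
    have pred0 : pred 0 := by intro m h1 h2; omega
    set T := Nat.findGreatest pred N with hT
    have hTN : T ≤ N := Nat.findGreatest_le N
    have hTspec : pred T := Nat.findGreatest_spec (Nat.zero_le N) pred0
    -- ψ k^2/(2R^2) ≤ decrease
    have hdecψ : ∀ k, 1 ≤ k → ψ k ^2 / (2*R^2) ≤ ψ k - ψ (k+1) := by
      intro k h1
      have h := hdec k h1
      have h2 := hψR k h1
      have h3 := hψ0 k h1
      have : ψ k ^2 ≤ R^2 * err k ^2 := by nlinarith
      rw [div_le_iff₀ (by positivity)]
      nlinarith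
    -- Phase 1: (k:ℝ) - 1 ≤ 2R²/ψ k for k ∈ [1,T]
    have phase1 : ∀ k, 1 ≤ k → k ≤ T → ((k:ℝ) - 1) ≤ 2*R^2 / ψ k := by
      intro k hk1
      induction k, hk1 using Nat.le_induction with
      | base =>
        intro h2
        have h3 := hTspec 1 le_rfl h2
        have h4 : 0 < ψ 1 := lt_trans hspos h3
        have : (0:ℝ) ≤ 2*R^2 / ψ 1 := by positivity
        push_cast
        linarith
      | succ k hk ih =>
        intro h2
        have hkT : k ≤ T := by omega
        have ihh := ih hkT
        have hψk : s < ψ k := hTspec k hk hkT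
        have hψk1 : s < ψ (k+1) := hTspec (k+1) (by omega) h2
        have hψkpos : 0 < ψ k := lt_trans hspos hψk
        have hψk1pos : 0 < ψ (k+1) := lt_trans hspos hψk1
        have hd := hdecψ k hk
        have hd' : ψ k^2 ≤ (ψ k - ψ (k+1)) * (2*R^2) := (div_le_iff₀ (by positivity)).mp hd
        have hmono : ψ (k+1) ≤ ψ k := by nlinarith
        have key : 2*R^2/ψ k + 1 ≤ 2*R^2/ψ (k+1) := by
          rw [div_add' _ _ _ (ne_of_gt hψkpos), div_le_div_iff₀ hψkpos hψk1pos]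
          nlinarith [mul_nonneg (sub_nonneg.mpr hmono) hψkpos.le]
        push_cast
        linarith
    have hTbound : (T:ℝ) < 1 + 2*R/ε₀ := by
      rcases Nat.eq_zero_or_pos T with h0 | hpos
      · rw [h0]; push_cast; positivity
      · have h := phase1 T hpos le_rfl
        have hψT : s < ψ T := hTspec T hpos le_rfl
        have hψTpos : 0 < ψ T := lt_trans hspos hψT
        have : 2*R^2/ψ T < 2*R^2/s := by
          exact div_lt_div_of_pos_left (by positivity) hspos hψT
        have h2 : 2*R^2/s = 2*R/ε₀ := by
          rw [hs]; field_simp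
        rw [h2] at this
        linarith
    -- Phase 2
    have phase2 : ∀ j : ℕ, T + j ≤ N → ψ (T+1+j) + (j:ℝ) * (ε₀^2/2) ≤ ψ (T+1) := by
      intro j
      induction j with
      | zero => intro _; simp
      | succ j ih =>
        intro hj
        have ihh := ih (by omega)
        have hd := hdecε (T+1+j) (by omega) (by omega)
        push_cast
        have : T+1+(j+1) = (T+1+j)+1 := by ring
        rw [this]
        linarith
    have hTend : (N:ℝ) - (T:ℝ) ≤ 2*R/ε₀ := by
      rcases eq_or_lt_of_le hTN with heq | hlt
      · rw [heq]; simp; positivity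
      · -- ψ (T+1) ≤ s
        have hnp : ¬ pred (T+1) := Nat.findGreatest_is_greatest (by omega) hlt
        have hnp' : ¬ (∀ m, 1 ≤ m → m ≤ T+1 → s < ψ m) := hnp
        push_neg at hnp'
        obtain ⟨m, hm1, hm2, hm3⟩ := hnp'
        have hmT : m = T + 1 := by
          by_contra hne
          have : m ≤ T := by omega
          exact absurd hm3 (not_le.mpr (hTspec m hm1 this))
        rw [hmT] at hm3
        have hp2 := phase2 (N - T) (by omega)
        have hcast : ((N - T : ℕ):ℝ) = (N:ℝ) - (T:ℝ) := by
          push_cast [Nat.cast_sub hTN]; ring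
        rw [hcast] at hp2
        have hψN1 := hψ0 (T+1+(N-T)) (by omega)
        have hkey : ((N:ℝ) - T) * (ε₀^2/2) ≤ s := by linarith
        rw [hs] at hkey
        rw [le_div_iff₀ hε]
        nlinarith
    have : (N:ℝ) < 1 + 4*R/ε₀ := by
      have : 4*R/ε₀ = 2*R/ε₀ + 2*R/ε₀ := by ring
      rw [this]
      linarith
    linarith

lemma pairing {n : ℕ} [NeZero n] (x y : Fin n → ℝ) (R : ℝ)
    (hx : ∑ i, x i = 0) (hy : ∀ i i', y i - y i' ≤ 2*R) :
    ∑ i, x i * y i ≤ (∑ i, |x i|) * R := by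
  have hne : (Finset.univ : Finset (Fin n)).Nonempty := Finset.univ_nonempty
  set M := Finset.univ.sup' hne y with hM
  set m := Finset.univ.inf' hne y with hm
  obtain ⟨i₁, _, hi₁⟩ := Finset.exists_mem_eq_sup' hne y
  obtain ⟨i₂, _, hi₂⟩ := Finset.exists_mem_eq_inf' hne y
  have hMm : M - m ≤ 2*R := by rw [hM, hm, hi₁, hi₂]; exact hy i₁ i₂
  set μ := (M + m)/2 with hμ
  have hbound : ∀ i, |y i - μ| ≤ R := by
    intro i
    have h1 : y i ≤ M := Finset.le_sup' y (Finset.mem_univ i)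
    have h2 : m ≤ y i := Finset.inf'_le y (Finset.mem_univ i)
    rw [abs_le]
    constructor <;> [skip; skip] <;> rw [hμ] <;> linarith
  calc ∑ i, x i * y i = ∑ i, x i * (y i - μ) := by
        rw [← sub_eq_zero]
        rw [← Finset.sum_sub_distrib]
        have : ∀ i, x i * y i - x i * (y i - μ) = x i * μ := by intro i; ring
        simp_rw [this, ← Finset.sum_mul, hx, zero_mul]
    _ ≤ ∑ i, |x i| * R := by
        apply Finset.sum_le_sum
        intro i _
        calc x i * (y i - μ) ≤ |x i * (y i - μ)| := le_abs_self _
          _ = |x i| * |y i - μ| := abs_mul _ _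
          _ ≤ |x i| * R := mul_le_mul_of_nonneg_left (hbound i) (abs_nonneg _)
    _ = (∑ i, |x i|) * R := by rw [Finset.sum_mul]


set_option maxHeartbeats 2000000 in
theorem stmt_10 (n : ℕ) [NeZero n] (C : Fin n → Fin n → ℝ) (hC : ∀ i j, 0 ≤ C i j)
    (γ ε₀ : ℝ) (hγ : 0 < γ) (hε : 0 < ε₀)
    (r c : Fin n → ℝ) (hr : ∀ i, 0 < r i) (hc : ∀ j, 0 < c j)
    (hr1 : ∑ i, r i = 1) (hc1 : ∑ j, c j = 1)
    (B : (Fin n → ℝ) → (Fin n → ℝ) → Fin n → Fin n → ℝ)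
    (hB : ∀ u v i j, B u v i j = Real.exp (u i) * Real.exp (-(C i j) / γ) * Real.exp (v j))
    (u v : ℕ → Fin n → ℝ) (hu0 : u 0 = 0) (hv0 : v 0 = 0)
    (heven : ∀ k, Even k →
      (∀ i, u (k + 1) i = u k i + Real.log (r i) - Real.log (∑ j, B (u k) (v k) i j)) ∧
      v (k + 1) = v k)
    (hodd : ∀ k, ¬ Even k →
      (∀ j, v (k + 1) j = v k j + Real.log (c j) - Real.log (∑ i, B (u k) (v k) i j)) ∧
      u (k + 1) = u k)
    (R : ℝ)
    (hR : R = -Real.log (Real.exp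
        (-(Finset.univ.sup' Finset.univ_nonempty fun i =>
            Finset.univ.sup' Finset.univ_nonempty fun j => |C i j|) / γ) *
      min (Finset.univ.inf' Finset.univ_nonempty r)
        (Finset.univ.inf' Finset.univ_nonempty c))) :
    ∃ k : ℕ, (k : ℝ) ≤ 2 + 4 * R / ε₀ ∧
      (∑ i, |(∑ j, B (u k) (v k) i j) - r i|) +
        (∑ j, |(∑ i, B (u k) (v k) i j) - c j|) ≤ ε₀ := by
  -- basic positivity
  have hBpos : ∀ k i j, 0 < B (u k) (v k) i j := by
    intro k i j; rw [hB]; positivity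
  have hapos : ∀ k i, 0 < ∑ j, B (u k) (v k) i j :=
    fun k i => Finset.sum_pos (fun j _ => hBpos k i j) Finset.univ_nonempty
  have hbpos : ∀ k j, 0 < ∑ i, B (u k) (v k) i j :=
    fun k j => Finset.sum_pos (fun i _ => hBpos k i j) Finset.univ_nonempty
  -- constants
  set K : ℝ := Finset.univ.sup' Finset.univ_nonempty fun i =>
      Finset.univ.sup' Finset.univ_nonempty fun j => |C i j| with hKdef
  set ρ : ℝ := min (Finset.univ.inf' Finset.univ_nonempty r)
      (Finset.univ.inf' Finset.univ_nonempty c) with hρdef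
  have hKC : ∀ i j, C i j ≤ K := by
    intro i j
    rw [hKdef]
    calc C i j ≤ |C i j| := le_abs_self _
      _ ≤ Finset.univ.sup' Finset.univ_nonempty fun j => |C i j| :=
          Finset.le_sup' (f := fun j => |C i j|) (Finset.mem_univ j)
      _ ≤ _ := Finset.le_sup' (f := fun i => Finset.univ.sup' Finset.univ_nonempty
          fun j => |C i j|) (Finset.mem_univ i)
  have hK0 : 0 ≤ K := le_trans (hC default default) (hKC default default)
  have hρr : ∀ i, ρ ≤ r i := by
    intro i
    exact le_trans (min_le_left _ _) (Finset.inf'_le r (Finset.mem_univ i))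
  have hρc : ∀ j, ρ ≤ c j := by
    intro j
    exact le_trans (min_le_right _ _) (Finset.inf'_le c (Finset.mem_univ j))
  have hρpos : 0 < ρ := by
    rw [hρdef]
    apply lt_min
    · exact (Finset.lt_inf'_iff _).mpr fun i _ => hr i
    · exact (Finset.lt_inf'_iff _).mpr fun j _ => hc j
  have hr_le1 : ∀ i, r i ≤ 1 := by
    intro i
    rw [← hr1]
    exact Finset.single_le_sum (fun i _ => (hr i).le) (Finset.mem_univ i)
  have hc_le1 : ∀ j, c j ≤ 1 := by
    intro j
    rw [← hc1]
    exact Finset.single_le_sum (fun j _ => (hc j).le) (Finset.mem_univ j)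
  have hρ1 : ρ ≤ 1 := le_trans (hρr default) (hr_le1 default)
  have hRval : R = K/γ - Real.log ρ := by
    rw [hR, Real.log_mul (Real.exp_ne_zero _) (ne_of_gt hρpos), Real.log_exp]
    ring
  have hR0 : 0 ≤ R := by
    rw [hRval]
    have h1 : Real.log ρ ≤ 0 := Real.log_nonpos hρpos.le hρ1
    have h2 : 0 ≤ K/γ := by positivity
    linarith
  -- step lemmas
  have hstep_even : ∀ k, Even k → ∀ i j, B (u (k+1)) (v (k+1)) i j
      = B (u k) (v k) i j * (r i / (∑ j', B (u k) (v k) i j')) := by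
    intro k hk i j
    obtain ⟨hu', hv'⟩ := heven k hk
    rw [hB, hB, hu' i, hv', sub_eq_add_neg, Real.exp_add, Real.exp_add, Real.exp_neg,
      Real.exp_log (hr i), Real.exp_log (hapos k i)]
    field_simp
  have hstep_odd : ∀ k, ¬ Even k → ∀ i j, B (u (k+1)) (v (k+1)) i j
      = B (u k) (v k) i j * (c j / (∑ i', B (u k) (v k) i' j)) := by
    intro k hk i j
    obtain ⟨hv', hu'⟩ := hodd k hk
    rw [hB, hB, hv' j, hu', sub_eq_add_neg, Real.exp_add, Real.exp_add, Real.exp_neg,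
      Real.exp_log (hc j), Real.exp_log (hbpos k j)]
    field_simp
  have harow : ∀ k, Even k → ∀ i, (∑ j, B (u (k+1)) (v (k+1)) i j) = r i := by
    intro k hk i
    rw [Finset.sum_congr rfl (fun j _ => hstep_even k hk i j), ← Finset.sum_mul]
    field_simp
    exact mul_div_cancel_left₀ _ (ne_of_gt (hapos k i))
  have hbcol : ∀ k, ¬ Even k → ∀ j, (∑ i, B (u (k+1)) (v (k+1)) i j) = c j := by
    intro k hk j
    rw [Finset.sum_congr rfl (fun i _ => hstep_odd k hk i j), ← Finset.sum_mul]
    field_simp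
    exact mul_div_cancel_left₀ _ (ne_of_gt (hbpos k j))
  have ha_odd : ∀ k, ¬ Even k → ∀ i, (∑ j, B (u k) (v k) i j) = r i := by
    intro k hk i
    obtain ⟨m, rfl⟩ : ∃ m, k = m + 1 := by
      rcases k with _ | m
      · exact absurd Even.zero hk
      · exact ⟨m, rfl⟩
    have hm : Even m := by
      by_contra h
      exact hk (Nat.even_add_one.mpr h)
    exact harow m hm i
  have hb_even : ∀ k, Even k → 1 ≤ k → ∀ j, (∑ i, B (u k) (v k) i j) = c j := by
    intro k hk hk1 j
    obtain ⟨m, rfl⟩ : ∃ m, k = m + 1 := ⟨k - 1, by omega⟩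
    have hm : ¬ Even m := by
      intro h
      exact (Nat.even_add_one.mp hk) h
    exact hbcol m hm j
  have hM : ∀ k, 1 ≤ k → ∑ i, ∑ j, B (u k) (v k) i j = 1 := by
    intro k hk
    rcases Nat.even_or_odd k with h | h
    · rw [Finset.sum_comm]
      rw [Finset.sum_congr rfl (fun j _ => hb_even k h hk j), hc1]
    · rw [Finset.sum_congr rfl (fun i _ => ha_odd k (Nat.not_even_iff_odd.mpr h) i), hr1]
  -- formulas for updated potentials
  have hu_formula : ∀ k, Even k → ∀ i,
      u (k+1) i = Real.log (r i) - Real.log (∑ j, Real.exp (v k j - C i j / γ)) := by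
    intro k hk i
    rw [(heven k hk).1 i]
    have hsum : (∑ j, B (u k) (v k) i j)
        = Real.exp (u k i) * ∑ j, Real.exp (v k j - C i j/γ) := by
      rw [Finset.mul_sum]
      apply Finset.sum_congr rfl
      intro j _
      rw [hB, ← Real.exp_add, ← Real.exp_add, ← Real.exp_add]
      exact congrArg Real.exp (by ring)
    have hpos : (0:ℝ) < ∑ j, Real.exp (v k j - C i j/γ) :=
      Finset.sum_pos (fun j _ => Real.exp_pos _) Finset.univ_nonempty
    rw [hsum, Real.log_mul (Real.exp_ne_zero _) (ne_of_gt hpos), Real.log_exp]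
    ring
  have hv_formula : ∀ k, ¬ Even k → ∀ j,
      v (k+1) j = Real.log (c j) - Real.log (∑ i, Real.exp (u k i - C i j / γ)) := by
    intro k hk j
    rw [(hodd k hk).1 j]
    have hsum : (∑ i, B (u k) (v k) i j)
        = Real.exp (v k j) * ∑ i, Real.exp (u k i - C i j/γ) := by
      rw [Finset.mul_sum]
      apply Finset.sum_congr rfl
      intro i _
      rw [hB, ← Real.exp_add, ← Real.exp_add, ← Real.exp_add]
      exact congrArg Real.exp (by ring)
    have hpos : (0:ℝ) < ∑ i, Real.exp (u k i - C i j/γ) :=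
      Finset.sum_pos (fun i _ => Real.exp_pos _) Finset.univ_nonempty
    rw [hsum, Real.log_mul (Real.exp_ne_zero _) (ne_of_gt hpos), Real.log_exp]
    ring
  -- oscillation bound for freshly-updated variables
  have osc_u_upd : ∀ k, Even k → ∀ i i', u (k+1) i - u (k+1) i' ≤ R := by
    intro k hk i i'
    rw [hu_formula k hk i, hu_formula k hk i']
    set T : ℝ := ∑ j, Real.exp (v k j) with hT
    have hTpos : 0 < T := Finset.sum_pos (fun j _ => Real.exp_pos _) Finset.univ_nonempty
    have hS : ∀ i'', (0:ℝ) < ∑ j, Real.exp (v k j - C i'' j/γ) :=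
      fun i'' => Finset.sum_pos (fun j _ => Real.exp_pos _) Finset.univ_nonempty
    have hup : (∑ j, Real.exp (v k j - C i' j/γ)) ≤ T := by
      rw [hT]
      apply Finset.sum_le_sum
      intro j _
      apply Real.exp_le_exp.mpr
      have := hC i' j
      have h2 : 0 ≤ C i' j / γ := by positivity
      linarith
    have hlow : Real.exp (-(K/γ)) * T ≤ ∑ j, Real.exp (v k j - C i j/γ) := by
      rw [hT, Finset.mul_sum]
      apply Finset.sum_le_sum
      intro j _
      rw [← Real.exp_add]
      apply Real.exp_le_exp.mpr
      have h1 : C i j / γ ≤ K / γ := by gcongr; exact hKC i j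
      linarith
    have h1 : Real.log (r i) ≤ 0 := Real.log_nonpos (hr i).le (hr_le1 i)
    have h2 : Real.log ρ ≤ Real.log (r i') := Real.log_le_log hρpos (hρr i')
    have h3 : Real.log (∑ j, Real.exp (v k j - C i' j/γ)) ≤ Real.log T :=
      Real.log_le_log (hS i') hup
    have h4 : -(K/γ) + Real.log T ≤ Real.log (∑ j, Real.exp (v k j - C i j/γ)) := by
      calc -(K/γ) + Real.log T = Real.log (Real.exp (-(K/γ)) * T) := by
            rw [Real.log_mul (Real.exp_ne_zero _) (ne_of_gt hTpos), Real.log_exp]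
        _ ≤ _ := Real.log_le_log (by positivity) hlow
    rw [hRval]
    linarith
  have osc_v_upd : ∀ k, ¬ Even k → ∀ j j', v (k+1) j - v (k+1) j' ≤ R := by
    intro k hk j j'
    rw [hv_formula k hk j, hv_formula k hk j']
    set T : ℝ := ∑ i, Real.exp (u k i) with hT
    have hTpos : 0 < T := Finset.sum_pos (fun i _ => Real.exp_pos _) Finset.univ_nonempty
    have hS : ∀ j'', (0:ℝ) < ∑ i, Real.exp (u k i - C i j''/γ) :=
      fun j'' => Finset.sum_pos (fun i _ => Real.exp_pos _) Finset.univ_nonempty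
    have hup : (∑ i, Real.exp (u k i - C i j'/γ)) ≤ T := by
      rw [hT]
      apply Finset.sum_le_sum
      intro i _
      apply Real.exp_le_exp.mpr
      have := hC i j'
      have h2 : 0 ≤ C i j' / γ := by positivity
      linarith
    have hlow : Real.exp (-(K/γ)) * T ≤ ∑ i, Real.exp (u k i - C i j/γ) := by
      rw [hT, Finset.mul_sum]
      apply Finset.sum_le_sum
      intro i _
      rw [← Real.exp_add]
      apply Real.exp_le_exp.mpr
      have h1 : C i j / γ ≤ K / γ := by gcongr; exact hKC i j
      linarith
    have h1 : Real.log (c j) ≤ 0 := Real.log_nonpos (hc j).le (hc_le1 j)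
    have h2 : Real.log ρ ≤ Real.log (c j') := Real.log_le_log hρpos (hρc j')
    have h3 : Real.log (∑ i, Real.exp (u k i - C i j'/γ)) ≤ Real.log T :=
      Real.log_le_log (hS j') hup
    have h4 : -(K/γ) + Real.log T ≤ Real.log (∑ i, Real.exp (u k i - C i j/γ)) := by
      calc -(K/γ) + Real.log T = Real.log (Real.exp (-(K/γ)) * T) := by
            rw [Real.log_mul (Real.exp_ne_zero _) (ne_of_gt hTpos), Real.log_exp]
        _ ≤ _ := Real.log_le_log (by positivity) hlow
    rw [hRval]
    linarith
  -- oscillation bounds along the iterates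
  have osc : ∀ k, 1 ≤ k →
      (∀ i i', u k i - u k i' ≤ R) ∧ (∀ j j', v k j - v k j' ≤ R) := by
    intro k hk
    induction k, hk using Nat.le_induction with
    | base =>
      constructor
      · exact osc_u_upd 0 Even.zero
      · intro j j'
        rw [(heven 0 Even.zero).2, hv0]
        simpa using hR0
    | succ k hk ih =>
      rcases Nat.even_or_odd k with h | h
      · refine ⟨osc_u_upd k h, ?_⟩
        intro j j'
        rw [(heven k h).2]
        exact ih.2 j j'
      · have h' : ¬ Even k := Nat.not_even_iff_odd.mpr h
        refine ⟨?_, osc_v_upd k h'⟩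
        intro i i'
        rw [(hodd k h').2]
        exact ih.1 i i'
  -- potential function and error
  set F : ℕ → ℝ := fun k => (∑ i, ∑ j, B (u k) (v k) i j)
      - (∑ i, u k i * r i) - (∑ j, v k j * c j) with hF
  set err : ℕ → ℝ := fun k => (∑ i, |(∑ j, B (u k) (v k) i j) - r i|)
      + (∑ j, |(∑ i, B (u k) (v k) i j) - c j|) with herr
  -- L4 : F k - F m ≤ R * err k
  have hL4 : ∀ k m, 1 ≤ k → 1 ≤ m → F k - F m ≤ R * err k := by
    intro k m hk hm
    have hconv : ∑ i, ∑ j, B (u k) (v k) i j * (1 + (u m i - u k i) + (v m j - v k j))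
        ≤ ∑ i, ∑ j, B (u m) (v m) i j := by
      apply Finset.sum_le_sum
      intro i _
      apply Finset.sum_le_sum
      intro j _
      have hxy : B (u m) (v m) i j
          = B (u k) (v k) i j * Real.exp ((u m i - u k i) + (v m j - v k j)) := by
        rw [hB, hB, ← Real.exp_add, ← Real.exp_add, ← Real.exp_add, ← Real.exp_add,
          ← Real.exp_add]
        exact congrArg Real.exp (by ring)
      rw [hxy]
      have h := Real.add_one_le_exp ((u m i - u k i) + (v m j - v k j))
      have hp := hBpos k i j
      nlinarith
    have hexpand : ∑ i, ∑ j, B (u k) (v k) i j * (1 + (u m i - u k i) + (v m j - v k j))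
        = (∑ i, ∑ j, B (u k) (v k) i j)
          + (∑ i, (u m i - u k i) * (∑ j, B (u k) (v k) i j))
          + (∑ j, (v m j - v k j) * (∑ i, B (u k) (v k) i j)) := by
      have e1 : ∀ i, ∑ j, B (u k) (v k) i j * (1 + (u m i - u k i) + (v m j - v k j))
          = (∑ j, B (u k) (v k) i j) + (u m i - u k i) * (∑ j, B (u k) (v k) i j)
            + (∑ j, (v m j - v k j) * B (u k) (v k) i j) := by
        intro i
        rw [Finset.mul_sum, ← Finset.sum_add_distrib, ← Finset.sum_add_distrib]
        apply Finset.sum_congr rfl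
        intro j _
        ring
      rw [Finset.sum_congr rfl (fun i _ => e1 i), Finset.sum_add_distrib,
        Finset.sum_add_distrib]
      congr 1
      rw [Finset.sum_comm]
      apply Finset.sum_congr rfl
      intro j _
      rw [Finset.mul_sum]
    have hMk := hM k hk
    have hMm := hM m hm
    have key : (∑ i, (u m i - u k i) * (∑ j, B (u k) (v k) i j))
        + (∑ j, (v m j - v k j) * (∑ i, B (u k) (v k) i j)) ≤ 0 := by
      rw [hexpand, hMm, hMk] at hconv
      linarith
    have hFdiff : F k - F m
        = (∑ i, (u m i - u k i) * r i) + (∑ j, (v m j - v k j) * c j) := by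
      simp only [hF]
      rw [hMk, hMm]
      have e2 : ∑ i, (u m i - u k i) * r i
          = (∑ i, u m i * r i) - (∑ i, u k i * r i) := by
        rw [← Finset.sum_sub_distrib]
        apply Finset.sum_congr rfl
        intro i _
        ring
      have e3 : ∑ j, (v m j - v k j) * c j
          = (∑ j, v m j * c j) - (∑ j, v k j * c j) := by
        rw [← Finset.sum_sub_distrib]
        apply Finset.sum_congr rfl
        intro j _
        ring
      rw [e2, e3]
      ring
    have hx1 : ∑ i, (r i - (∑ j, B (u k) (v k) i j)) = 0 := by
      rw [Finset.sum_sub_distrib, hr1, hMk]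
      ring
    have hx2 : ∑ j, (c j - (∑ i, B (u k) (v k) i j)) = 0 := by
      rw [Finset.sum_sub_distrib, hc1, Finset.sum_comm, hMk]
      ring
    have hy1 : ∀ i i', (u m i - u k i) - (u m i' - u k i') ≤ 2*R := by
      intro i i'
      have h1 := (osc m hm).1 i i'
      have h2 := (osc k hk).1 i' i
      linarith
    have hy2 : ∀ j j', (v m j - v k j) - (v m j' - v k j') ≤ 2*R := by
      intro j j'
      have h1 := (osc m hm).2 j j'
      have h2 := (osc k hk).2 j' j
      linarith
    have p1 := pairing (fun i => r i - (∑ j, B (u k) (v k) i j))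
      (fun i => u m i - u k i) R hx1 hy1
    have p2 := pairing (fun j => c j - (∑ i, B (u k) (v k) i j))
      (fun j => v m j - v k j) R hx2 hy2
    have e4 : ∑ i, (r i - (∑ j, B (u k) (v k) i j)) * (u m i - u k i)
        = (∑ i, (u m i - u k i) * r i)
          - (∑ i, (u m i - u k i) * (∑ j, B (u k) (v k) i j)) := by
      rw [← Finset.sum_sub_distrib]
      apply Finset.sum_congr rfl
      intro i _
      ring
    have e5 : ∑ j, (c j - (∑ i, B (u k) (v k) i j)) * (v m j - v k j)
        = (∑ j, (v m j - v k j) * c j)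
          - (∑ j, (v m j - v k j) * (∑ i, B (u k) (v k) i j)) := by
      rw [← Finset.sum_sub_distrib]
      apply Finset.sum_congr rfl
      intro j _
      ring
    rw [e4] at p1
    rw [e5] at p2
    have habs1 : ∑ i, |r i - (∑ j, B (u k) (v k) i j)|
        = ∑ i, |(∑ j, B (u k) (v k) i j) - r i| :=
      Finset.sum_congr rfl (fun i _ => abs_sub_comm _ _)
    have habs2 : ∑ j, |c j - (∑ i, B (u k) (v k) i j)|
        = ∑ j, |(∑ i, B (u k) (v k) i j) - c j| :=
      Finset.sum_congr rfl (fun j _ => abs_sub_comm _ _)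
    rw [habs1] at p1
    rw [habs2] at p2
    have herrk : err k = (∑ i, |(∑ j, B (u k) (v k) i j) - r i|)
        + (∑ j, |(∑ i, B (u k) (v k) i j) - c j|) := rfl
    rw [herrk]
    rw [hFdiff]
    nlinarith
  -- L5 : decrease
  have hL5 : ∀ k, 1 ≤ k → err k ^ 2 / 2 ≤ F k - F (k+1) := by
    intro k hk
    rcases Nat.even_or_odd k with h | h
    · have hu' := (heven k h).1
      have hv' := (heven k h).2
      have hMk := hM k hk
      have hMk1 := hM (k+1) (by omega)
      have hdiff : F k - F (k+1)
          = ∑ i, r i * (Real.log (r i) - Real.log (∑ j, B (u k) (v k) i j)) := by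
        simp only [hF]
        rw [hMk, hMk1, hv']
        have e2 : ∑ i, u (k+1) i * r i - ∑ i, u k i * r i
            = ∑ i, r i * (Real.log (r i) - Real.log (∑ j, B (u k) (v k) i j)) := by
          rw [← Finset.sum_sub_distrib]
          apply Finset.sum_congr rfl
          intro i _
          rw [hu' i]
          ring
        linarith [e2]
      have hP := pinsker r (fun i => ∑ j, B (u k) (v k) i j) hr (fun i => hapos k i) hr1 hMk
      have hbz : ∀ j, |(∑ i, B (u k) (v k) i j) - c j| = 0 := by
        intro j
        rw [hb_even k h hk j]
        simp
      have herrk : err k = ∑ i, |(∑ j, B (u k) (v k) i j) - r i| := by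
        have : err k = (∑ i, |(∑ j, B (u k) (v k) i j) - r i|)
            + (∑ j, |(∑ i, B (u k) (v k) i j) - c j|) := rfl
        rw [this, Finset.sum_congr rfl (fun j _ => hbz j)]
        simp
      rw [herrk, hdiff]
      have habs : ∑ i, |(∑ j, B (u k) (v k) i j) - r i|
          = ∑ i, |r i - (∑ j, B (u k) (v k) i j)| :=
        Finset.sum_congr rfl (fun i _ => abs_sub_comm _ _)
      rw [habs]
      exact hP
    · have h' : ¬ Even k := Nat.not_even_iff_odd.mpr h
      have hv' := (hodd k h').1
      have hu' := (hodd k h').2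
      have hMk := hM k hk
      have hMk1 := hM (k+1) (by omega)
      have hMkc : ∑ j, ∑ i, B (u k) (v k) i j = 1 := by
        rw [Finset.sum_comm]
        exact hMk
      have hdiff : F k - F (k+1)
          = ∑ j, c j * (Real.log (c j) - Real.log (∑ i, B (u k) (v k) i j)) := by
        simp only [hF]
        rw [hMk, hMk1, hu']
        have e2 : ∑ j, v (k+1) j * c j - ∑ j, v k j * c j
            = ∑ j, c j * (Real.log (c j) - Real.log (∑ i, B (u k) (v k) i j)) := by
          rw [← Finset.sum_sub_distrib]
          apply Finset.sum_congr rfl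
          intro j _
          rw [hv' j]
          ring
        linarith [e2]
      have hP := pinsker c (fun j => ∑ i, B (u k) (v k) i j) hc (fun j => hbpos k j) hc1 hMkc
      have haz : ∀ i, |(∑ j, B (u k) (v k) i j) - r i| = 0 := by
        intro i
        rw [ha_odd k h' i]
        simp
      have herrk : err k = ∑ j, |(∑ i, B (u k) (v k) i j) - c j| := by
        have : err k = (∑ i, |(∑ j, B (u k) (v k) i j) - r i|)
            + (∑ j, |(∑ i, B (u k) (v k) i j) - c j|) := rfl
        rw [this, Finset.sum_congr rfl (fun i _ => haz i)]
        simp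
      rw [herrk, hdiff]
      have habs : ∑ j, |(∑ i, B (u k) (v k) i j) - c j|
          = ∑ j, |c j - (∑ i, B (u k) (v k) i j)| :=
        Finset.sum_congr rfl (fun j _ => abs_sub_comm _ _)
      rw [habs]
      exact hP
  -- conclusion via the counting lemma
  have hbdd : BddBelow (Set.range fun m : ℕ => F (m+1)) := by
    refine ⟨F 1 - R * err 1, ?_⟩
    rintro x ⟨m, rfl⟩
    have := hL4 1 (m+1) le_rfl (by omega)
    simp only
    linarith
  set fstar : ℝ := ⨅ m : ℕ, F (m+1) with hfstar
  have hψ0 : ∀ k, 1 ≤ k → 0 ≤ F k - fstar := by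
    intro k hk
    obtain ⟨m, rfl⟩ : ∃ m, k = m+1 := ⟨k-1, by omega⟩
    have := ciInf_le hbdd m
    rw [← hfstar] at this
    linarith
  have hψR : ∀ k, 1 ≤ k → F k - fstar ≤ R * err k := by
    intro k hk
    have hle : F k - R * err k ≤ fstar := by
      rw [hfstar]
      apply le_ciInf
      intro m
      have := hL4 k (m+1) hk (by omega)
      linarith
    linarith
  have hdecψ : ∀ k, 1 ≤ k → err k ^ 2 / 2 ≤ (F k - fstar) - (F (k+1) - fstar) := by
    intro k hk
    have := hL5 k hk
    linarith
  set N : ℕ := ⌈1 + 4*R/ε₀⌉₊ with hN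
  have hNlb : 1 + 4*R/ε₀ ≤ (N:ℝ) := Nat.le_ceil _
  obtain ⟨k, hk1, hkN, hke⟩ := count_lemma (fun k => F k - fstar) err R ε₀ hR0 hε N
    (fun k hk => hψ0 k hk) (fun k hk => hψR k hk) (fun k hk => hdecψ k hk) hNlb
  refine ⟨k, ?_, ?_⟩
  · have h40 : 0 ≤ 4*R/ε₀ := div_nonneg (by linarith) hε.le
    have hNub : (N:ℝ) < (1 + 4*R/ε₀) + 1 := Nat.ceil_lt_add_one (by linarith)
    have hkc : (k:ℝ) ≤ (N:ℝ) := Nat.cast_le.mpr hkN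
    linarith
  · exact hke
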